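/- arXiv:1905.09384 — 2 statements merged into one kernel-verified Lean document; each statement's English description precedes it below -/
import Mathlib

section
/- If X and Y are independent exponential random variables with means m_x and m_y respectively, then the harmonic-mean-type random variable W = XY/(X+Y) has cumulative distribution function F_W(w) = 1 - (2w/√(m_x m_y)) · exp(-w/m_x - w/m_y) · K_1(2w/√(m_x m_y)) for w > 0, where K_1 is the modified Bessel function of the second kind of order 1. -/
open MeasureTheory ProbabilityTheory Real Set
open scoped ENNReal

/-- Modified Bessel function of the second kind of order 1, via the standard
integral representation `K₁(x) = ∫_0^∞ exp (-x cosh t) * cosh t dt`. -/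
noncomputable def besselK1 (x : ℝ) : ℝ :=
  ∫ t in Set.Ioi (0 : ℝ), Real.exp (-x * Real.cosh t) * Real.cosh t


lemma cosh_ge (u : ℝ) : (1 + |u|) / 2 ≤ Real.cosh u := by
  rw [← Real.cosh_abs]
  have h1 : 1 + |u| ≤ Real.exp |u| := by simpa [add_comm] using Real.add_one_le_exp |u|
  have h2 : Real.exp |u| / 2 ≤ Real.cosh |u| := by
    rw [Real.cosh_eq]
    have := Real.exp_nonneg (-|u|)
    linarith
  linarith

lemma exp_neg_le (x : ℝ) (hx : 0 < x) : Real.exp (-x) ≤ 27 / x ^ 3 := by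
  have h1 : x ^ 3 / 27 ≤ Real.exp x := by
    have h2 : x / 3 ≤ Real.exp (x / 3) := (Real.add_one_le_exp _).trans' (by linarith)
    have h3 : (x / 3) ^ 3 ≤ Real.exp (x / 3) ^ 3 := by
      apply pow_le_pow_left₀ (by positivity) h2
    calc x ^ 3 / 27 = (x / 3) ^ 3 := by ring
    _ ≤ Real.exp (x / 3) ^ 3 := h3
    _ = Real.exp x := by rw [← Real.exp_nat_mul]; ring_nf
  rw [Real.exp_neg, inv_le_comm₀ (Real.exp_pos x) (by positivity)]
  calc (27 / x ^ 3)⁻¹ = x ^ 3 / 27 := by field_simp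
  _ ≤ Real.exp x := h1

lemma besselK1_integrand_le {s : ℝ} (hs : 0 < s) (u : ℝ) :
    Real.exp (-s * Real.cosh u) * Real.cosh u ≤ 108 / s ^ 3 * (1 + u ^ 2)⁻¹ := by
  have hc : 0 < Real.cosh u := Real.cosh_pos u
  have h1 : Real.exp (-s * Real.cosh u) ≤ 27 / (s * Real.cosh u) ^ 3 := by
    simpa [neg_mul] using exp_neg_le (s * Real.cosh u) (by positivity)
  have h2 : Real.exp (-s * Real.cosh u) * Real.cosh u ≤ 27 / (s ^ 3 * Real.cosh u ^ 2) := by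
    calc Real.exp (-s * Real.cosh u) * Real.cosh u ≤ 27 / (s * Real.cosh u) ^ 3 * Real.cosh u :=
          mul_le_mul_of_nonneg_right h1 hc.le
    _ = 27 / (s ^ 3 * Real.cosh u ^ 2) := by field_simp
  have h3 : (1 + u ^ 2) / 4 ≤ Real.cosh u ^ 2 := by
    have := cosh_ge u
    have h4 : ((1 + |u|) / 2) ^ 2 ≤ Real.cosh u ^ 2 :=
      pow_le_pow_left₀ (by positivity) this 2
    have h5 : (1 + u ^ 2) / 4 ≤ ((1 + |u|) / 2) ^ 2 := by
      have := abs_nonneg u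
      have := sq_abs u
      nlinarith
    linarith
  calc Real.exp (-s * Real.cosh u) * Real.cosh u ≤ 27 / (s ^ 3 * Real.cosh u ^ 2) := h2
  _ ≤ 27 / (s ^ 3 * ((1 + u ^ 2) / 4)) := by
      apply div_le_div_of_nonneg_left (by norm_num) (by positivity)
      exact mul_le_mul_of_nonneg_left h3 (by positivity)
  _ = 108 / s ^ 3 * (1 + u ^ 2)⁻¹ := by field_simp; ring

lemma integrable_besselK1_integrand {s : ℝ} (hs : 0 < s) :
    Integrable (fun u : ℝ => Real.exp (-s * Real.cosh u) * Real.cosh u) := by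
  have hg : Integrable (fun u : ℝ => 108 / s ^ 3 * (1 + u ^ 2)⁻¹) :=
    integrable_inv_one_add_sq.const_mul _
  refine hg.mono' ?_ ?_
  · exact ((Real.continuous_exp.comp ((continuous_const.mul Real.continuous_cosh))).mul
      Real.continuous_cosh).aestronglyMeasurable
  · filter_upwards with u
    rw [Real.norm_eq_abs, abs_of_nonneg (by positivity)]
    exact besselK1_integrand_le hs u

lemma integrable_besselK1_sinh {s : ℝ} (hs : 0 < s) :
    Integrable (fun u : ℝ => Real.exp (-s * Real.cosh u) * Real.sinh u) := by
  refine (integrable_besselK1_integrand hs).mono' ?_ ?_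
  · exact ((Real.continuous_exp.comp ((continuous_const.mul Real.continuous_cosh))).mul
      Real.continuous_sinh).aestronglyMeasurable
  · filter_upwards with u
    rw [Real.norm_eq_abs, abs_mul, abs_of_nonneg (Real.exp_nonneg _)]
    have h1 : |Real.sinh u| ≤ Real.cosh u := by
      rw [Real.abs_sinh, ← Real.cosh_abs]
      exact (Real.sinh_lt_cosh _).le
    exact mul_le_mul_of_nonneg_left h1 (Real.exp_nonneg _)

lemma integral_exp_cosh_exp {s : ℝ} (hs : 0 < s) :
    ∫ u : ℝ, Real.exp (-s * Real.cosh u) * Real.exp u = 2 * besselK1 s := by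
  have h1 : ∀ u : ℝ, Real.exp (-s * Real.cosh u) * Real.exp u =
      Real.exp (-s * Real.cosh u) * Real.cosh u + Real.exp (-s * Real.cosh u) * Real.sinh u := by
    intro u; rw [← mul_add, Real.cosh_add_sinh]
  rw [funext h1, integral_add (integrable_besselK1_integrand hs) (integrable_besselK1_sinh hs)]
  have hodd : ∫ u : ℝ, Real.exp (-s * Real.cosh u) * Real.sinh u = 0 := by
    have := MeasureTheory.integral_neg_eq_self
      (fun u : ℝ => Real.exp (-s * Real.cosh u) * Real.sinh u) (volume : Measure ℝ)
    simp only [Real.cosh_neg, Real.sinh_neg, mul_neg] at this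
    rw [MeasureTheory.integral_neg] at this
    linarith
  have heven : ∫ u : ℝ, Real.exp (-s * Real.cosh u) * Real.cosh u = 2 * besselK1 s := by
    have h2 : ∀ u : ℝ, Real.exp (-s * Real.cosh u) * Real.cosh u =
        (fun t => Real.exp (-s * Real.cosh t) * Real.cosh t) |u| := by
      intro u; simp [Real.cosh_abs]
    rw [funext h2]
    exact integral_comp_abs (f := fun t => Real.exp (-s * Real.cosh t) * Real.cosh t)
  rw [hodd, heven, add_zero]

lemma key_subst {w mx my : ℝ} (hw : 0 < w) (hmx : 0 < mx) (hmy : 0 < my) :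
    ∫ x in Ioi w, 1 / mx * Real.exp (-(1 / mx * x) - 1 / my * (w * x / (x - w))) =
      2 * w / Real.sqrt (mx * my) * Real.exp (-(w / mx) - w / my) *
        besselK1 (2 * w / Real.sqrt (mx * my)) := by
  have ha : 0 < Real.sqrt mx := Real.sqrt_pos.mpr hmx
  have hb : 0 < Real.sqrt my := Real.sqrt_pos.mpr hmy
  set a := Real.sqrt mx with ha_def
  set b := Real.sqrt my with hb_def
  have hmx' : mx = a ^ 2 := (Real.sq_sqrt hmx.le).symm
  have hmy' : my = b ^ 2 := (Real.sq_sqrt hmy.le).symm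
  have hab : Real.sqrt (mx * my) = a * b := Real.sqrt_mul hmx.le my
  set c := w * a / b with hc_def
  have hc : 0 < c := by positivity
  set s := 2 * w / (a * b) with hs_def
  have hs : 0 < s := by positivity
  -- the substitution x = w + c * exp u
  have himg : (fun u : ℝ => w + c * Real.exp u) '' univ = Ioi w := by
    rw [image_univ]
    ext y
    constructor
    · rintro ⟨u, rfl⟩
      have := Real.exp_pos u
      simp only [mem_Ioi]
      nlinarith
    · intro hy
      refine ⟨Real.log ((y - w) / c), ?_⟩
      show w + c * Real.exp (Real.log ((y - w) / c)) = y
      rw [Real.exp_log (div_pos (sub_pos.mpr hy) hc)]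
      field_simp
      ring
  have hsub := integral_image_eq_integral_abs_deriv_smul (f := fun u : ℝ => w + c * Real.exp u)
    (f' := fun u : ℝ => c * Real.exp u) MeasurableSet.univ
    (fun x _ => (((Real.hasDerivAt_exp x).const_mul c).const_add w).hasDerivWithinAt)
    (fun u _ v _ h => by
      simp only at h
      have h2 : c * Real.exp u = c * Real.exp v := by linarith
      exact Real.exp_injective (mul_left_cancel₀ hc.ne' h2))
    (fun x => 1 / mx * Real.exp (-(1 / mx * x) - 1 / my * (w * x / (x - w))))
  rw [himg] at hsub
  rw [hsub, Measure.restrict_univ]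
  have hcongr : ∀ u : ℝ,
      |c * Real.exp u| • (1 / mx * Real.exp (-(1 / mx * (w + c * Real.exp u)) -
          1 / my * (w * (w + c * Real.exp u) / (w + c * Real.exp u - w)))) =
      w / (a * b) * Real.exp (-(w / mx) - w / my) *
        (Real.exp (-s * Real.cosh u) * Real.exp u) := by
    intro u
    have hE : 0 < Real.exp u := Real.exp_pos u
    rw [smul_eq_mul, abs_of_pos (by positivity)]
    have hexp : -(1 / mx * (w + c * Real.exp u)) -
        1 / my * (w * (w + c * Real.exp u) / (w + c * Real.exp u - w)) =
        (-(w / mx) - w / my) + -s * Real.cosh u := by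
      have hden : w + c * Real.exp u - w = c * Real.exp u := by ring
      rw [hden, Real.cosh_eq, Real.exp_neg, hmx', hmy', hc_def, hs_def]
      have hE' : Real.exp u ≠ 0 := hE.ne'
      field_simp [ha.ne', hb.ne', hw.ne', hE']
      ring
    rw [hexp, Real.exp_add]
    have hcoef : c * (1 / mx) = w / (a * b) := by
      rw [hmx', hc_def]
      field_simp
    calc c * Real.exp u * (1 / mx * (Real.exp (-(w / mx) - w / my) *
            Real.exp (-s * Real.cosh u)))
        = c * (1 / mx) * (Real.exp (-(w / mx) - w / my) *
            (Real.exp (-s * Real.cosh u) * Real.exp u)) := by ring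
      _ = w / (a * b) * Real.exp (-(w / mx) - w / my) *
            (Real.exp (-s * Real.cosh u) * Real.exp u) := by rw [hcoef]; ring
  rw [integral_congr_ae (Filter.Eventually.of_forall hcongr), integral_const_mul,
    integral_exp_cosh_exp hs, hab]
  ring

lemma expMeasure_eq (r : ℝ) : expMeasure r = volume.withDensity (exponentialPDF r) := rfl

lemma expMeasure_Iic {r : ℝ} (hr : 0 < r) (x : ℝ) :
    expMeasure r (Iic x) = ENNReal.ofReal (if 0 ≤ x then 1 - Real.exp (-(r * x)) else 0) := by
  rw [expMeasure_eq, withDensity_apply _ measurableSet_Iic,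
    lintegral_exponentialPDF_eq_antiDeriv hr]

lemma expMeasure_Iic_zero {r : ℝ} (hr : 0 < r) : expMeasure r (Iic 0) = 0 := by
  rw [expMeasure_Iic hr, if_pos le_rfl]
  simp

lemma expMeasure_Ioi {r : ℝ} (hr : 0 < r) {x : ℝ} (hx : 0 ≤ x) :
    expMeasure r (Ioi x) = ENNReal.ofReal (Real.exp (-(r * x))) := by
  have : IsProbabilityMeasure (expMeasure r) := isProbabilityMeasure_expMeasure hr
  have he : Real.exp (-(r * x)) ≤ 1 := by
    rw [Real.exp_le_one_iff]
    have : 0 ≤ r * x := mul_nonneg hr.le hx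
    linarith
  rw [← compl_Iic, measure_compl measurableSet_Iic (measure_ne_top _ _), measure_univ,
    expMeasure_Iic hr, if_pos hx]
  rw [← ENNReal.ofReal_one, ← ENNReal.ofReal_sub _ (by linarith)]
  norm_num

theorem exp_harmonic_cdf {Ω : Type*} [MeasureSpace Ω] [IsProbabilityMeasure (ℙ : Measure Ω)]
    (X Y : Ω → ℝ) (mx my : ℝ) (hmx : 0 < mx) (hmy : 0 < my)
    (hX : Measurable X) (hY : Measurable Y)
    (hXd : Measure.map X ℙ = expMeasure (1 / mx))
    (hYd : Measure.map Y ℙ = expMeasure (1 / my))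
    (hind : IndepFun X Y ℙ) :
    ∀ w : ℝ, 0 < w →
      (ℙ {ω | X ω * Y ω / (X ω + Y ω) ≤ w}).toReal =
        1 - (2 * w / Real.sqrt (mx * my)) * Real.exp (-(w / mx) - w / my) *
          besselK1 (2 * w / Real.sqrt (mx * my)) := by
  intro w hw
  have hrx : 0 < 1 / mx := by positivity
  have hry : 0 < 1 / my := by positivity
  set μ := expMeasure (1 / mx) with hμ
  set ν := expMeasure (1 / my) with hν
  have : IsProbabilityMeasure μ := isProbabilityMeasure_expMeasure hrx
  have : IsProbabilityMeasure ν := isProbabilityMeasure_expMeasure hry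
  have hWmeas : Measurable fun p : ℝ × ℝ => p.1 * p.2 / (p.1 + p.2) :=
    (measurable_fst.mul measurable_snd).div (measurable_fst.add measurable_snd)
  set A : Set (ℝ × ℝ) := {p | p.1 * p.2 / (p.1 + p.2) ≤ w} with hA_def
  have hA : MeasurableSet A := measurableSet_le hWmeas measurable_const
  have hmap : Measure.map (fun ω => (X ω, Y ω)) ℙ = μ.prod ν :=
    ((indepFun_iff_map_prod_eq_prod_map_map hX.aemeasurable hY.aemeasurable).mp hind).trans
      (by rw [hXd, hYd])

  have hP : ℙ {ω | X ω * Y ω / (X ω + Y ω) ≤ w} = (μ.prod ν) A := by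
    rw [← hmap, Measure.map_apply (hX.prodMk hY) hA]
    rfl
  --密度 integrand
  set h₂ : ℝ → ℝ := fun x => 1 / mx * Real.exp (-(1 / mx * x) - 1 / my * (w * x / (x - w)))
    with hh₂
  have hh₂meas : Measurable h₂ := by fun_prop
  -- the inner conditional survival function
  set g : ℝ → ℝ≥0∞ := (Ioi w).indicator
    (fun x => ENNReal.ofReal (Real.exp (-(1 / my * (w * x / (x - w)))))) with hg_def
  have hgmeas : Measurable g := by
    apply Measurable.indicator ?_ measurableSet_Ioi
    fun_prop
  have hν0 : ν (Iic 0) = 0 := expMeasure_Iic_zero hry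
  have hμ0 : μ (Iic 0) = 0 := expMeasure_Iic_zero hrx
  have hxpos : ∀ᵐ x ∂μ, 0 < x := by
    rw [ae_iff]
    convert hμ0 using 2
    ext x
    simp [not_lt]
  have hae : ∀ᵐ x ∂μ, ν (Prod.mk x ⁻¹' Aᶜ) = g x := by
    filter_upwards [hxpos] with x hx
    by_cases hxw : w < x
    · have hxw' : 0 < x - w := sub_pos.mpr hxw
      set cpt := w * x / (x - w) with hcpt_def
      have hcpt : 0 < cpt := div_pos (mul_pos hw hx) hxw'
      have hset : Prod.mk x ⁻¹' Aᶜ =ᵐ[ν] Ioi cpt := by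
        rw [MeasureTheory.ae_eq_set]
        constructor
        · apply measure_mono_null ?_ hν0
          intro y hy
          simp only [mem_diff, mem_preimage, mem_compl_iff, hA_def, mem_setOf_eq, mem_Ioi,
            not_lt, not_le] at hy
          obtain ⟨hy1, hy2⟩ := hy
          by_contra hy0
          have hy0' : 0 < y := not_le.mp (fun h => hy0 (mem_Iic.mpr h))
          have hxy : 0 < x + y := by linarith
          rw [lt_div_iff₀ hxy] at hy1
          rw [hcpt_def, le_div_iff₀ hxw'] at hy2
          nlinarith
        · have : Ioi cpt \ (Prod.mk x ⁻¹' Aᶜ) = ∅ := by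
            rw [diff_eq_empty]
            intro y hy
            rw [mem_Ioi] at hy
            have hy0 : 0 < y := hcpt.trans hy
            have hxy : 0 < x + y := by linarith
            simp only [mem_preimage, mem_compl_iff, hA_def, mem_setOf_eq, not_le]
            rw [lt_div_iff₀ hxy]
            rw [hcpt_def, div_lt_iff₀ hxw'] at hy
            nlinarith
          rw [this, measure_empty]
      rw [measure_congr hset, hν, expMeasure_Ioi hry hcpt.le, hg_def,
        indicator_of_mem (mem_Ioi.mpr hxw)]
    · have hxw'' : x ∉ Ioi w := fun h => hxw (mem_Ioi.mp h)
      rw [hg_def, indicator_of_notMem hxw'']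
      apply measure_mono_null ?_ hν0
      intro y hy
      simp only [mem_preimage, mem_compl_iff, hA_def, mem_setOf_eq, not_le] at hy
      rw [mem_Iic]
      by_contra hy0
      push_neg at hy0
      have hxy : 0 < x + y := by linarith
      rw [lt_div_iff₀ hxy] at hy
      push_neg at hxw
      nlinarith
  have hlint : (μ.prod ν) Aᶜ = ∫⁻ x in Ioi w, ENNReal.ofReal (h₂ x) := by
    rw [Measure.prod_apply hA.compl, lintegral_congr_ae hae, hμ, expMeasure_eq,
      lintegral_withDensity_eq_lintegral_mul _
        (show Measurable (exponentialPDF (1 / mx)) from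
          (measurable_exponentialPDFReal _).ennreal_ofReal) hgmeas]
    rw [← lintegral_indicator measurableSet_Ioi]
    apply lintegral_congr
    intro x
    by_cases hxw : w < x
    · rw [indicator_of_mem (mem_Ioi.mpr hxw), Pi.mul_apply, hg_def,
        indicator_of_mem (mem_Ioi.mpr hxw), exponentialPDF_of_nonneg (by linarith : (0:ℝ) ≤ x),
        ← ENNReal.ofReal_mul (by positivity)]
      congr 1
      rw [hh₂]
      show _ = 1 / mx * Real.exp (-(1 / mx * x) - 1 / my * (w * x / (x - w)))
      rw [show -(1 / mx * x) - 1 / my * (w * x / (x - w)) =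
        -(1 / mx * x) + -(1 / my * (w * x / (x - w))) from by ring, Real.exp_add]
      ring
    · have hxw'' : x ∉ Ioi w := fun h => hxw (mem_Ioi.mp h)
      rw [indicator_of_notMem hxw'', Pi.mul_apply, hg_def, indicator_of_notMem hxw'', mul_zero]
  have htoReal : ((μ.prod ν) Aᶜ).toReal = ∫ x in Ioi w, h₂ x := by
    rw [hlint]
    exact (integral_eq_lintegral_of_nonneg_ae
      (Filter.Eventually.of_forall fun x => by positivity)
      hh₂meas.aestronglyMeasurable).symm
  have hcompl : (μ.prod ν) A = 1 - (μ.prod ν) Aᶜ := by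
    rw [measure_compl hA (measure_ne_top _ _), measure_univ,
      ENNReal.sub_sub_cancel ENNReal.one_ne_top prob_le_one]
  rw [hP, hcompl, ENNReal.toReal_sub_of_le prob_le_one ENNReal.one_ne_top, ENNReal.toReal_one,
    htoReal, key_subst hw hmx hmy]
end

section
/- Let γ_g = ρ G, γ_h = ρ H, γ_f = ρ F with G, H, F > 0 fixed, and define the instantaneous secrecy rate R_s(ρ) = max(0, (1/3)[log₂(1+γ_D) - log₂(1 + max(γ_R1^(1), γ_R2, γ_R1^(3)))]) using the exact SINR expressions of the three-hop scheme. Then the high-SNR slope lim_{ρ→∞} R_s(ρ)/log₂(ρ) equals 1/3. -/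
open Filter Real

/-- Instantaneous secrecy rate of the three-hop untrusted relaying scheme with
channel gains `G, H, F` and transmit SNR `ρ`, using the exact SINR expressions. -/
noncomputable def secrecyRate (G H F ρ : ℝ) : ℝ :=
  let γg := ρ * G
  let γh := ρ * H
  let γf := ρ * F
  let γR1₁ := γg / (γh + 1)
  let γR2 := γg * γh / (γg * γf + γh * γf + 2 * γh + γg + γf + 1)
  let γR1₃ := γg * γh ^ 2 /
    (γh ^ 2 + γh * (γg + 1) ^ 2 + (γg + γh + 1) ^ 2 * (γf + 1))
  let γD := γg * γh * γf /
    (3 * γh * γf + 2 * γf * γg + γg * γh + 2 * γf + 2 * γh + γg + 1)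
  max 0 ((1 / 3) * (Real.logb 2 (1 + γD) - Real.logb 2 (1 + max γR1₁ (max γR2 γR1₃))))

theorem high_snr_slope (G H F : ℝ) (hG : 0 < G) (hH : 0 < H) (hF : 0 < F) :
    Tendsto (fun ρ : ℝ => secrecyRate G H F ρ / Real.logb 2 ρ) atTop
      (nhds (1 / 3)) := by
  have hu : Tendsto (fun ρ : ℝ => ρ⁻¹) atTop (nhds (0:ℝ)) := tendsto_inv_atTop_zero
  have hlogρ : Tendsto (fun ρ : ℝ => Real.logb 2 ρ) atTop atTop :=
    Real.tendsto_logb_atTop one_lt_two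
  have hpos : ∀ᶠ ρ : ℝ in atTop, 0 < ρ := eventually_gt_atTop 0
  -- the leakage SINR and destination SINR as functions of ρ
  set M : ℝ → ℝ := fun ρ =>
    max (ρ * G / (ρ * H + 1))
      (max (ρ * G * (ρ * H) / (ρ * G * (ρ * F) + ρ * H * (ρ * F) + 2 * (ρ * H) + ρ * G + ρ * F + 1))
        (ρ * G * (ρ * H) ^ 2 /
          ((ρ * H) ^ 2 + ρ * H * (ρ * G + 1) ^ 2 + (ρ * G + ρ * H + 1) ^ 2 * (ρ * F + 1)))) with hMdef
  set D : ℝ → ℝ := fun ρ =>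
    ρ * G * (ρ * H) * (ρ * F) /
      (3 * (ρ * H) * (ρ * F) + 2 * (ρ * F) * (ρ * G) + ρ * G * (ρ * H) + 2 * (ρ * F) +
        2 * (ρ * H) + ρ * G + 1) with hDdef
  have hsec : ∀ ρ : ℝ, secrecyRate G H F ρ =
      max 0 ((1 / 3) * (Real.logb 2 (1 + D ρ) - Real.logb 2 (1 + M ρ))) := fun ρ => rfl
  -- limits of the three leakage SINRs
  set L1 : ℝ := G / H with hL1
  set L2 : ℝ := G * H / (G * F + H * F) with hL2
  set L3 : ℝ := G * H ^ 2 / (H * G ^ 2 + (G + H) ^ 2 * F) with hL3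
  have h1 : Tendsto (fun ρ : ℝ => ρ * G / (ρ * H + 1)) atTop (nhds L1) := by
    have hden : Tendsto (fun ρ : ℝ => H + ρ⁻¹) atTop (nhds (H + 0)) :=
      tendsto_const_nhds.add hu
    have := Tendsto.div (tendsto_const_nhds (x := G)) hden (by simpa using hH.ne')
    rw [add_zero] at this
    refine this.congr' ?_
    filter_upwards [hpos] with ρ hρ
    have hρ' : ρ ≠ 0 := ne_of_gt hρ
    have h0 : ρ * H + 1 ≠ 0 := by positivity
    have h0' : H + ρ⁻¹ ≠ 0 := by positivity
    simp only [Pi.div_apply]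
    field_simp
  have h2 : Tendsto (fun ρ : ℝ =>
      ρ * G * (ρ * H) / (ρ * G * (ρ * F) + ρ * H * (ρ * F) + 2 * (ρ * H) + ρ * G + ρ * F + 1))
      atTop (nhds L2) := by
    have hden : Tendsto (fun ρ : ℝ => G * F + H * F + (2 * H + G + F) * ρ⁻¹ + ρ⁻¹ ^ 2)
        atTop (nhds (G * F + H * F + (2 * H + G + F) * 0 + 0 ^ 2)) :=
      ((tendsto_const_nhds.add (tendsto_const_nhds.mul hu)).add (hu.pow 2))
    have := Tendsto.div (tendsto_const_nhds (x := G * H)) hden (by norm_num; positivity)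
    refine Tendsto.congr' ?_ (by simpa using this)
    filter_upwards [hpos] with ρ hρ
    have hρ' : ρ ≠ 0 := ne_of_gt hρ
    have h0 : ρ * G * (ρ * F) + ρ * H * (ρ * F) + 2 * (ρ * H) + ρ * G + ρ * F + 1 ≠ 0 := by
      positivity
    have h0' : G * F + H * F + (2 * H + G + F) * ρ⁻¹ + ρ⁻¹ ^ 2 ≠ 0 := by positivity
    simp only [Pi.div_apply]
    field_simp
    ring
  have h3 : Tendsto (fun ρ : ℝ =>
      ρ * G * (ρ * H) ^ 2 /
        ((ρ * H) ^ 2 + ρ * H * (ρ * G + 1) ^ 2 + (ρ * G + ρ * H + 1) ^ 2 * (ρ * F + 1)))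
      atTop (nhds L3) := by
    have hden : Tendsto
        (fun ρ : ℝ => H ^ 2 * ρ⁻¹ + H * (G + ρ⁻¹) ^ 2 + (G + H + ρ⁻¹) ^ 2 * (F + ρ⁻¹))
        atTop (nhds (H ^ 2 * 0 + H * (G + 0) ^ 2 + (G + H + 0) ^ 2 * (F + 0))) := by
      refine ((tendsto_const_nhds.mul hu).add
        (tendsto_const_nhds.mul ((tendsto_const_nhds.add hu).pow 2))).add
        (((tendsto_const_nhds.add hu).pow 2).mul (tendsto_const_nhds.add hu))
    have := Tendsto.div (tendsto_const_nhds (x := G * H ^ 2)) hden (by norm_num; positivity)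
    have hlim : (G * H ^ 2) / (H ^ 2 * 0 + H * (G + 0) ^ 2 + (G + H + 0) ^ 2 * (F + 0)) = L3 := by
      rw [hL3]; ring_nf
    rw [hlim] at this
    refine Tendsto.congr' ?_ this
    filter_upwards [hpos] with ρ hρ
    have hρ' : ρ ≠ 0 := ne_of_gt hρ
    have h0 : (ρ * H) ^ 2 + ρ * H * (ρ * G + 1) ^ 2 + (ρ * G + ρ * H + 1) ^ 2 * (ρ * F + 1) ≠ 0 := by
      positivity
    have h0' : H ^ 2 * ρ⁻¹ + H * (G + ρ⁻¹) ^ 2 + (G + H + ρ⁻¹) ^ 2 * (F + ρ⁻¹) ≠ 0 := by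
      positivity
    simp only [Pi.div_apply]
    field_simp
  have hM : Tendsto M atTop (nhds (max L1 (max L2 L3))) := (h1.max (h2.max h3))
  have hLpos : 0 < 1 + max L1 (max L2 L3) := by
    have : (0:ℝ) ≤ L1 := by positivity
    have h := le_max_left L1 (max L2 L3)
    nlinarith
  -- the constant limit of `(1 + D ρ)/ρ`
  set c : ℝ := G * H * F / (3 * H * F + 2 * F * G + G * H) with hcdef
  have hcpos : 0 < c := by positivity
  have hq : Tendsto (fun ρ : ℝ => (1 + D ρ) / ρ) atTop (nhds c) := by
    have hden : Tendsto
        (fun ρ : ℝ => 3 * H * F + 2 * F * G + G * H + (2 * F + 2 * H + G) * ρ⁻¹ + ρ⁻¹ ^ 2)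
        atTop (nhds (3 * H * F + 2 * F * G + G * H + (2 * F + 2 * H + G) * 0 + 0 ^ 2)) :=
      ((tendsto_const_nhds.add (tendsto_const_nhds.mul hu)).add (hu.pow 2))
    have hfrac := Tendsto.div (tendsto_const_nhds (x := G * H * F)) hden (by norm_num; positivity)
    have hsum := hu.add hfrac
    rw [show (0:ℝ) + G * H * F / (3 * H * F + 2 * F * G + G * H + (2 * F + 2 * H + G) * 0 + 0 ^ 2)
        = c by rw [hcdef]; norm_num] at hsum
    refine Tendsto.congr' ?_ hsum
    filter_upwards [hpos] with ρ hρ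
    have hρ' : ρ ≠ 0 := ne_of_gt hρ
    have h0 : 3 * (ρ * H) * (ρ * F) + 2 * (ρ * F) * (ρ * G) + ρ * G * (ρ * H) +
        2 * (ρ * F) + 2 * (ρ * H) + ρ * G + 1 ≠ 0 := by positivity
    have h0' : 3 * H * F + 2 * F * G + G * H + (2 * F + 2 * H + G) * ρ⁻¹ + ρ⁻¹ ^ 2 ≠ 0 := by
      positivity
    rw [hDdef]
    simp only [Pi.div_apply]
    field_simp
    ring
  -- limits of the two correction terms
  have hBlim : Tendsto (fun ρ : ℝ => Real.logb 2 (1 + M ρ)) atTop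
      (nhds (Real.logb 2 (1 + max L1 (max L2 L3)))) := by
    have := ((tendsto_const_nhds.add hM).log hLpos.ne').div_const (Real.log 2)
    simpa [Real.logb] using this
  have hqlog : Tendsto (fun ρ : ℝ => Real.logb 2 ((1 + D ρ) / ρ)) atTop
      (nhds (Real.logb 2 c)) := by
    have := (hq.log hcpos.ne').div_const (Real.log 2)
    simpa [Real.logb] using this
  -- the difference of logs tends to atTop
  have hDpos : ∀ᶠ ρ : ℝ in atTop, 0 < D ρ := by
    filter_upwards [hpos] with ρ hρ
    rw [hDdef]; positivity
  have hsplit : ∀ᶠ ρ : ℝ in atTop, Real.logb 2 (1 + D ρ) =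
      Real.logb 2 ρ + Real.logb 2 ((1 + D ρ) / ρ) := by
    filter_upwards [hpos, hDpos] with ρ hρ hD
    rw [← Real.logb_mul (ne_of_gt hρ) (by positivity)]
    congr 1
    field_simp
  have hAB : Tendsto (fun ρ : ℝ => Real.logb 2 (1 + D ρ) - Real.logb 2 (1 + M ρ)) atTop atTop := by
    have hrest : Tendsto (fun ρ : ℝ => Real.logb 2 ((1 + D ρ) / ρ) - Real.logb 2 (1 + M ρ))
        atTop (nhds (Real.logb 2 c - Real.logb 2 (1 + max L1 (max L2 L3)))) := hqlog.sub hBlim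
    set K := Real.logb 2 c - Real.logb 2 (1 + max L1 (max L2 L3)) with hK
    have hge : ∀ᶠ ρ : ℝ in atTop,
        Real.logb 2 ρ + (K - 1) ≤ Real.logb 2 (1 + D ρ) - Real.logb 2 (1 + M ρ) := by
      filter_upwards [hsplit, hrest.eventually (eventually_ge_nhds (by linarith : K - 1 < K))]
        with ρ h1 h2
      rw [h1]; linarith
    exact tendsto_atTop_mono' _ hge (tendsto_atTop_add_const_right _ _ hlogρ)
  -- eventual form of the quotient
  have hEq : ∀ᶠ ρ : ℝ in atTop,
      secrecyRate G H F ρ / Real.logb 2 ρ =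
        (1 / 3) * (1 + Real.logb 2 ((1 + D ρ) / ρ) / Real.logb 2 ρ -
          Real.logb 2 (1 + M ρ) / Real.logb 2 ρ) := by
    filter_upwards [hsplit, hAB.eventually (eventually_gt_atTop 0),
      hlogρ.eventually (eventually_gt_atTop 0)] with ρ hsp hABpos hlogpos
    rw [hsec ρ, max_eq_right (by positivity), hsp]
    field_simp
  have hfin : Tendsto (fun ρ : ℝ =>
      (1 / 3) * (1 + Real.logb 2 ((1 + D ρ) / ρ) / Real.logb 2 ρ -
        Real.logb 2 (1 + M ρ) / Real.logb 2 ρ)) atTop (nhds ((1 / 3) * (1 + 0 - 0))) :=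
    tendsto_const_nhds.mul ((tendsto_const_nhds.add (hqlog.div_atTop hlogρ)).sub
      (hBlim.div_atTop hlogρ))
  rw [show ((1:ℝ) / 3) * (1 + 0 - 0) = 1 / 3 by norm_num] at hfin
  exact hfin.congr' (by filter_upwards [hEq] with ρ h; exact h.symm)
end
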